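/- Let $\varepsilon\in(0,1)$ and let $p\in[0,1]^{\binom{[n]}{2}}$ be a sub-probability vector such that $\sum_{\{a,b\}}p_{ab}-\sum_{\{a,c\}}\mathsf{HopD}[p](a,c)\ge\varepsilon$. Then $\sum_{\{a,b\}\in\binom{[n]}{2}}p_{ab}^4\ge 2\varepsilon^4/n^{9/2}$. -/

import Mathlib

open Finset

/-- `deg_p(a) = (1/2) ∑_b p_{ab}` (with `p` a symmetric matrix, zero diagonal). -/
noncomputable def degp (n : ℕ) (p : Fin n → Fin n → ℝ) (a : Fin n) : ℝ :=
  (∑ b, p a b) / 2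

/-- `Walk[p]({a,c},b)`; division by zero is zero, matching `0/0 = 0`. -/
noncomputable def walkFn (n : ℕ) (p : Fin n → Fin n → ℝ) (a c b : Fin n) : ℝ :=
  p a b * p b c / (2 * degp n p b)

/-- `Hop[p](a,c) = ∑_{b ∉ {a,c}} Walk[p]({a,c},b)`. -/
noncomputable def hopFn (n : ℕ) (p : Fin n → Fin n → ℝ) (a c : Fin n) : ℝ :=
  ∑ b ∈ Finset.univ.filter (fun b => b ≠ a ∧ b ≠ c), walkFn n p a c b

/-- `max_{b ∉ {a,c}} Walk[p]({a,c},b)`. -/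
noncomputable def maxWalkFn (n : ℕ) (p : Fin n → Fin n → ℝ) (a c : Fin n) : ℝ :=
  sSup ((fun b => walkFn n p a c b) '' {b : Fin n | b ≠ a ∧ b ≠ c})

/-- `HopD[p](a,c)`. -/
noncomputable def hopDFn (n : ℕ) (p : Fin n → Fin n → ℝ) (a c : Fin n) : ℝ :=
  hopFn n p a c - maxWalkFn n p a c

private lemma aux_cauchy_step (X Y s : ℝ) (hs : 0 < s) :
    (X + Y) ^ 2 ≤ (1 + s) * (X ^ 2 + Y ^ 2 / s) := by
  have h : (1 + s) * (X ^ 2 + Y ^ 2 / s) - (X + Y) ^ 2 = (Y - s * X) ^ 2 / s := by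
    field_simp; ring
  have h2 : 0 ≤ (Y - s * X) ^ 2 / s := div_nonneg (sq_nonneg _) hs.le
  linarith

private lemma aux_cauchy4 (A B s : ℝ) (hs : 0 < s) :
    (A + B) ^ 4 ≤ (1 + s) ^ 3 * (A ^ 4 + B ^ 4 / s ^ 3) := by
  have h1 := aux_cauchy_step A B s hs
  have h2 := aux_cauchy_step (A ^ 2) (B ^ 2 / s) s hs
  have e : (B ^ 2 / s) ^ 2 / s = B ^ 4 / s ^ 3 := by
    field_simp
  calc (A + B) ^ 4 = ((A + B) ^ 2) ^ 2 := by ring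
    _ ≤ ((1 + s) * (A ^ 2 + B ^ 2 / s)) ^ 2 := by
        apply pow_le_pow_left₀ (sq_nonneg _) h1
    _ = (1 + s) ^ 2 * ((A ^ 2 + B ^ 2 / s)) ^ 2 := by ring
    _ ≤ (1 + s) ^ 2 * ((1 + s) * ((A ^ 2) ^ 2 + (B ^ 2 / s) ^ 2 / s)) := by
        apply mul_le_mul_of_nonneg_left h2 (by positivity)
    _ = (1 + s) ^ 3 * (A ^ 4 + (B ^ 2 / s) ^ 2 / s) := by ring
    _ = (1 + s) ^ 3 * (A ^ 4 + B ^ 4 / s ^ 3) := by rw [e]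

private lemma aux_global (n : ℕ) (hn3 : 3 ≤ n) (R σ F : Fin n → ℝ) (x : Fin n → ℕ)
    (ε : ℝ) (hε : 0 ≤ ε)
    (hRnn : ∀ b, 0 ≤ R b) (hσnn : ∀ b, 0 ≤ σ b) (hFnn : ∀ b, 0 ≤ F b)
    (hkey : ∀ b, (R b + σ b) ^ 4
      ≤ (1 + Real.sqrt ((x b : ℝ))) ^ 3 * (Real.sqrt 2 * F b))
    (hx : (∑ b, ((x b : ℝ))) = (n : ℝ) * n - n)
    (hmaster : ε ≤ (∑ b, (R b + σ b)) / 2) :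
    16 * ε ^ 4 ≤ 4 * ((n : ℝ) ^ 4 * Real.sqrt (n : ℝ)) * ∑ b, F b := by
  have hn0 : (0:ℝ) < (n:ℝ) := by
    have : 0 < n := by omega
    exact_mod_cast this
  have hnR : (3:ℝ) ≤ (n:ℝ) := by exact_mod_cast hn3
  set aw : Fin n → ℝ := fun b => 1 + Real.sqrt ((x b : ℝ)) with haw
  set t : Fin n → ℝ := fun b => R b + σ b with ht
  have hawpos : ∀ b, 0 < aw b := fun b => by
    have := Real.sqrt_nonneg ((x b : ℝ))
    rw [haw]; dsimp only; linarith
  have htnn : ∀ b, 0 ≤ t b := fun b => add_nonneg (hRnn b) (hσnn b)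
  clear_value aw t
  have hkey' : ∀ b, (t b) ^ 4 ≤ (aw b) ^ 3 * (Real.sqrt 2 * F b) := by
    intro b
    rw [ht, haw]; exact hkey b
  have hc1 : (∑ b, t b) ^ 2 ≤ (∑ b, aw b) * (∑ b, (t b) ^ 2 / aw b) := by
    have h := sum_mul_sq_le_sq_mul_sq Finset.univ
      (fun b => Real.sqrt (aw b)) (fun b => t b / Real.sqrt (aw b))
    have e1 : ∀ b : Fin n, Real.sqrt (aw b) * (t b / Real.sqrt (aw b)) = t b := by
      intro b
      have hq : Real.sqrt (aw b) ≠ 0 := ne_of_gt (Real.sqrt_pos.mpr (hawpos b))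
      field_simp
    have e2 : ∀ b : Fin n, (Real.sqrt (aw b)) ^ 2 = aw b :=
      fun b => Real.sq_sqrt (hawpos b).le
    have e3 : ∀ b : Fin n, (t b / Real.sqrt (aw b)) ^ 2 = (t b) ^ 2 / aw b := by
      intro b; rw [div_pow, e2]
    calc (∑ b, t b) ^ 2
        = (∑ b, Real.sqrt (aw b) * (t b / Real.sqrt (aw b))) ^ 2 := by
          rw [Finset.sum_congr rfl fun b _ => (e1 b)]
      _ ≤ (∑ b, (Real.sqrt (aw b)) ^ 2) * ∑ b, (t b / Real.sqrt (aw b)) ^ 2 := h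
      _ = (∑ b, aw b) * (∑ b, (t b) ^ 2 / aw b) := by
          rw [Finset.sum_congr rfl fun b _ => (e2 b),
            Finset.sum_congr rfl fun b _ => (e3 b)]
  have hc2 : (∑ b, (t b) ^ 2 / aw b) ^ 2
      ≤ (∑ b, aw b) * (∑ b, (t b) ^ 4 / (aw b) ^ 3) := by
    have h := sum_mul_sq_le_sq_mul_sq Finset.univ
      (fun b => Real.sqrt (aw b)) (fun b => (t b) ^ 2 / (Real.sqrt (aw b)) ^ 3)
    have e1 : ∀ b : Fin n, Real.sqrt (aw b) * ((t b) ^ 2 / (Real.sqrt (aw b)) ^ 3)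
        = (t b) ^ 2 / aw b := by
      intro b
      have hq : Real.sqrt (aw b) ≠ 0 := ne_of_gt (Real.sqrt_pos.mpr (hawpos b))
      have ha' : aw b ≠ 0 := ne_of_gt (hawpos b)
      have e2 := Real.sq_sqrt (hawpos b).le
      rw [show (Real.sqrt (aw b)) ^ 3 = (Real.sqrt (aw b)) ^ 2 * Real.sqrt (aw b)
        from by ring, e2]
      field_simp
    have e2 : ∀ b : Fin n, (Real.sqrt (aw b)) ^ 2 = aw b :=
      fun b => Real.sq_sqrt (hawpos b).le
    have e3 : ∀ b : Fin n, ((t b) ^ 2 / (Real.sqrt (aw b)) ^ 3) ^ 2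
        = (t b) ^ 4 / (aw b) ^ 3 := by
      intro b
      rw [div_pow]
      congr 1
      · ring
      · calc ((Real.sqrt (aw b)) ^ 3) ^ 2 = ((Real.sqrt (aw b)) ^ 2) ^ 3 := by ring
          _ = (aw b) ^ 3 := by rw [e2]
    calc (∑ b, (t b) ^ 2 / aw b) ^ 2
        = (∑ b, Real.sqrt (aw b) * ((t b) ^ 2 / (Real.sqrt (aw b)) ^ 3)) ^ 2 := by
          rw [Finset.sum_congr rfl fun b _ => (e1 b)]
      _ ≤ (∑ b, (Real.sqrt (aw b)) ^ 2)
            * ∑ b, ((t b) ^ 2 / (Real.sqrt (aw b)) ^ 3) ^ 2 := h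
      _ = (∑ b, aw b) * (∑ b, (t b) ^ 4 / (aw b) ^ 3) := by
          rw [Finset.sum_congr rfl fun b _ => (e2 b),
            Finset.sum_congr rfl fun b _ => (e3 b)]
  have hc3 : (∑ b, (t b) ^ 4 / (aw b) ^ 3) ≤ Real.sqrt 2 * ∑ b, F b := by
    rw [Finset.mul_sum]
    refine Finset.sum_le_sum fun b _ => ?_
    rw [div_le_iff₀ (pow_pos (hawpos b) 3)]
    calc (t b) ^ 4 ≤ (aw b) ^ 3 * (Real.sqrt 2 * F b) := hkey' b
      _ = Real.sqrt 2 * F b * (aw b) ^ 3 := by ring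
  have hAsum0 : 0 ≤ ∑ b, aw b := Finset.sum_nonneg fun b _ => (hawpos b).le
  have htsum0 : 0 ≤ ∑ b, t b := Finset.sum_nonneg fun b _ => htnn b
  have hG0 : 0 ≤ ∑ b, F b := Finset.sum_nonneg fun b _ => hFnn b
  have hglobal : (∑ b, t b) ^ 4 ≤ (∑ b, aw b) ^ 3 * (Real.sqrt 2 * ∑ b, F b) := by
    calc (∑ b, t b) ^ 4 = ((∑ b, t b) ^ 2) ^ 2 := by ring
      _ ≤ ((∑ b, aw b) * (∑ b, (t b) ^ 2 / aw b)) ^ 2 :=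
          pow_le_pow_left₀ (sq_nonneg _) hc1 2
      _ = (∑ b, aw b) ^ 2 * ((∑ b, (t b) ^ 2 / aw b)) ^ 2 := by ring
      _ ≤ (∑ b, aw b) ^ 2 * ((∑ b, aw b) * (∑ b, (t b) ^ 4 / (aw b) ^ 3)) :=
          mul_le_mul_of_nonneg_left hc2 (sq_nonneg _)
      _ ≤ (∑ b, aw b) ^ 2 * ((∑ b, aw b) * (Real.sqrt 2 * ∑ b, F b)) := by
          apply mul_le_mul_of_nonneg_left _ (sq_nonneg _)
          exact mul_le_mul_of_nonneg_left hc3 hAsum0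
      _ = (∑ b, aw b) ^ 3 * (Real.sqrt 2 * ∑ b, F b) := by ring
  have hsumsqrt : (∑ b, Real.sqrt ((x b : ℝ)))
      ≤ Real.sqrt ((n : ℝ) * ((n : ℝ) * n - n)) := by
    have hC := sum_mul_sq_le_sq_mul_sq Finset.univ
      (fun _ : Fin n => (1:ℝ)) (fun b => Real.sqrt ((x b : ℝ)))
    simp only [one_mul, one_pow] at hC
    rw [Finset.sum_const, Finset.card_univ, Fintype.card_fin, nsmul_eq_mul, mul_one] at hC
    have hC2 : (∑ b, Real.sqrt ((x b : ℝ))) ^ 2 ≤ (n : ℝ) * ((n : ℝ) * n - n) := by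
      calc (∑ b, Real.sqrt ((x b : ℝ))) ^ 2
          ≤ (n : ℝ) * ∑ b, (Real.sqrt ((x b : ℝ))) ^ 2 := hC
        _ = (n : ℝ) * ∑ b, ((x b : ℝ)) := by
            rw [Finset.sum_congr rfl fun b _ => Real.sq_sqrt (Nat.cast_nonneg _)]
        _ = (n : ℝ) * ((n : ℝ) * n - n) := by rw [hx]
    have h0 : 0 ≤ ∑ b, Real.sqrt ((x b : ℝ)) :=
      Finset.sum_nonneg fun b _ => Real.sqrt_nonneg _
    calc (∑ b, Real.sqrt ((x b : ℝ)))
        = Real.sqrt ((∑ b, Real.sqrt ((x b : ℝ))) ^ 2) := (Real.sqrt_sq h0).symm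
      _ ≤ Real.sqrt ((n : ℝ) * ((n : ℝ) * n - n)) := Real.sqrt_le_sqrt hC2
  have hAle : (∑ b, aw b) ≤ (n : ℝ) * Real.sqrt (2 * n) := by
    have e : (∑ b, aw b) = (n : ℝ) + ∑ b, Real.sqrt ((x b : ℝ)) := by
      rw [haw, Finset.sum_add_distrib, Finset.sum_const, Finset.card_univ,
        Fintype.card_fin, nsmul_eq_mul, mul_one]
    have h2n : 2 * Real.sqrt (2 * (n : ℝ)) ≤ (n : ℝ) + 2 := by
      have e1 : 2 * Real.sqrt (2 * (n : ℝ)) = Real.sqrt (8 * n) := by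
        rw [show (8 : ℝ) * n = 2 ^ 2 * (2 * n) by ring,
          Real.sqrt_mul (show (0:ℝ) ≤ 2 ^ 2 by norm_num) (2 * (n:ℝ)),
          Real.sqrt_sq (show (0:ℝ) ≤ 2 by norm_num)]
      rw [e1, show (n : ℝ) + 2 = Real.sqrt (((n : ℝ) + 2) ^ 2) from
        (Real.sqrt_sq (by positivity)).symm]
      apply Real.sqrt_le_sqrt
      nlinarith [sq_nonneg ((n : ℝ) - 2)]
    have hsq2n : (Real.sqrt (2 * (n : ℝ))) ^ 2 = 2 * n := Real.sq_sqrt (by positivity)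
    have hstep : Real.sqrt ((n : ℝ) * ((n : ℝ) * n - n))
        ≤ (n : ℝ) * Real.sqrt (2 * n) - n := by
      have hone : (1:ℝ) ≤ Real.sqrt (2 * n) := by
        rw [show (1:ℝ) = Real.sqrt 1 from Real.sqrt_one.symm]
        apply Real.sqrt_le_sqrt
        linarith
      have hrhs0 : 0 ≤ (n : ℝ) * Real.sqrt (2 * n) - n := by nlinarith [hn0]
      rw [show (n : ℝ) * Real.sqrt (2 * n) - n
          = Real.sqrt (((n : ℝ) * Real.sqrt (2 * n) - n) ^ 2) from
        (Real.sqrt_sq hrhs0).symm]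
      apply Real.sqrt_le_sqrt
      have hexp : ((n : ℝ) * Real.sqrt (2 * n) - n) ^ 2
          = 2 * (n:ℝ) ^ 3 + (n:ℝ) ^ 2 - 2 * (n:ℝ) ^ 2 * Real.sqrt (2 * n) := by
        have e9 : ((n : ℝ) * Real.sqrt (2 * n) - n) ^ 2
            = (n:ℝ) ^ 2 * (Real.sqrt (2 * n)) ^ 2 - 2 * (n:ℝ) ^ 2 * Real.sqrt (2 * n)
              + (n:ℝ) ^ 2 := by ring
        rw [e9, hsq2n]; ring
      rw [hexp]
      have hmul : 2 * (n:ℝ) ^ 2 * Real.sqrt (2 * n) ≤ (n:ℝ) ^ 2 * ((n : ℝ) + 2) := by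
        have h9 := mul_le_mul_of_nonneg_left h2n (sq_nonneg (n:ℝ))
        nlinarith [h9]
      nlinarith [hmul]
    linarith [e, hsumsqrt, hstep]
  have hfinal : 16 * ε ^ 4 ≤ 4 * ((n : ℝ) ^ 4 * Real.sqrt (n : ℝ)) * ∑ b, F b := by
    have h2ε : 2 * ε ≤ ∑ b, t b := by
      have e : (∑ b, t b) = ∑ b, (R b + σ b) := by rw [ht]
      rw [e]; linarith [hmaster]
    have h4 : (2 * ε) ^ 4 ≤ (∑ b, t b) ^ 4 :=
      pow_le_pow_left₀ (by linarith) h2ε 4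
    have hcube : (∑ b, aw b) ^ 3 ≤ ((n : ℝ) * Real.sqrt (2 * n)) ^ 3 :=
      pow_le_pow_left₀ hAsum0 hAle 3
    have hmono : (∑ b, aw b) ^ 3 * (Real.sqrt 2 * ∑ b, F b)
        ≤ ((n : ℝ) * Real.sqrt (2 * n)) ^ 3 * (Real.sqrt 2 * ∑ b, F b) := by
      apply mul_le_mul_of_nonneg_right hcube
      exact mul_nonneg (Real.sqrt_nonneg 2) hG0
    have hval : ((n : ℝ) * Real.sqrt (2 * n)) ^ 3 * Real.sqrt 2
        = 4 * ((n : ℝ) ^ 4 * Real.sqrt (n : ℝ)) := by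
      have e1 : ((n : ℝ) * Real.sqrt (2 * n)) ^ 3
          = (n:ℝ) ^ 3 * ((2 * n) * Real.sqrt (2 * n)) := by
        have e0 : (Real.sqrt (2 * (n:ℝ))) ^ 3
            = (Real.sqrt (2 * n)) ^ 2 * Real.sqrt (2 * n) := by ring
        rw [mul_pow, e0, Real.sq_sqrt (by positivity : (0:ℝ) ≤ 2 * n)]
      have e2 : Real.sqrt (2 * (n:ℝ)) * Real.sqrt 2 = 2 * Real.sqrt (n:ℝ) := by
        rw [← Real.sqrt_mul (by positivity : (0:ℝ) ≤ 2 * (n:ℝ)) 2]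
        rw [show (2 * (n:ℝ)) * 2 = 2 ^ 2 * n by ring]
        rw [Real.sqrt_mul (by positivity : (0:ℝ) ≤ (2:ℝ) ^ 2) (n:ℝ)]
        rw [Real.sqrt_sq (by norm_num : (0:ℝ) ≤ 2)]
      calc ((n : ℝ) * Real.sqrt (2 * n)) ^ 3 * Real.sqrt 2
          = (n:ℝ) ^ 3 * (2 * n) * (Real.sqrt (2 * n) * Real.sqrt 2) := by
            rw [e1]; ring
        _ = (n:ℝ) ^ 3 * (2 * n) * (2 * Real.sqrt (n:ℝ)) := by rw [e2]
        _ = 4 * ((n : ℝ) ^ 4 * Real.sqrt (n : ℝ)) := by ring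
    calc 16 * ε ^ 4 = (2 * ε) ^ 4 := by ring
      _ ≤ (∑ b, t b) ^ 4 := h4
      _ ≤ (∑ b, aw b) ^ 3 * (Real.sqrt 2 * ∑ b, F b) := hglobal
      _ ≤ ((n : ℝ) * Real.sqrt (2 * n)) ^ 3 * (Real.sqrt 2 * ∑ b, F b) := hmono
      _ = (((n : ℝ) * Real.sqrt (2 * n)) ^ 3 * Real.sqrt 2) * ∑ b, F b := by ring
      _ = 4 * ((n : ℝ) ^ 4 * Real.sqrt (n : ℝ)) * ∑ b, F b := by rw [hval]
  exact hfinal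

set_option maxHeartbeats 2000000 in
theorem stmt12 (n : ℕ) (ε : ℝ) (hε0 : 0 < ε) (hε1 : ε < 1)
    (p : Fin n → Fin n → ℝ)
    (hsymm : ∀ a b, p a b = p b a) (hdiag : ∀ a, p a a = 0)
    (hnn : ∀ a b, 0 ≤ p a b) (hle : ∀ a b, p a b ≤ 1)
    (hsub : (∑ a, ∑ b, p a b) / 2 ≤ 1)
    (hcon : ε ≤ (∑ a, ∑ b, p a b) / 2
        - (∑ a, ∑ c ∈ Finset.univ.filter (· ≠ a), hopDFn n p a c) / 2) :
    2 * ε ^ 4 / (n : ℝ) ^ ((9 : ℝ) / 2) ≤ (∑ a, ∑ b, (p a b) ^ 4) / 2 := by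
  rcases lt_or_ge n 3 with hn | hn3
  · interval_cases n
    · -- n = 0
      have h1 : ((0:ℕ) : ℝ) ^ ((9 : ℝ) / 2) = 0 := by
        rw [Nat.cast_zero, Real.zero_rpow (by norm_num : (9:ℝ)/2 ≠ 0)]
      rw [h1, div_zero]
      positivity
    · -- n = 1
      exfalso
      have h2 : (Finset.univ.filter (· ≠ (0 : Fin 1))) = (∅ : Finset (Fin 1)) := by decide
      have h3 : (∑ a : Fin 1, ∑ c ∈ Finset.univ.filter (· ≠ a), hopDFn 1 p a c) = 0 := by
        rw [Fin.sum_univ_one, h2, Finset.sum_empty]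
      have h4 : (∑ a : Fin 1, ∑ b : Fin 1, p a b) = 0 := by
        rw [Fin.sum_univ_one, Fin.sum_univ_one, hdiag]
      rw [h3, h4] at hcon
      norm_num at hcon
      linarith
    · -- n = 2
      have hfin2 : ∀ a c : Fin 2, a ≠ c → ∀ b : Fin 2, ¬(b ≠ a ∧ b ≠ c) := by
        intro a c hac b hb
        obtain ⟨h1, h2⟩ := hb
        have e1 : b.val ≠ a.val := fun h => h1 (Fin.ext h)
        have e2 : b.val ≠ c.val := fun h => h2 (Fin.ext h)
        have e3 : a.val ≠ c.val := fun h => hac (Fin.ext h)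
        have := a.isLt; have := b.isLt; have := c.isLt
        omega
      have hop0 : ∀ a c : Fin 2, a ≠ c → hopFn 2 p a c = 0 := by
        intro a c hac
        unfold hopFn
        rw [Finset.sum_eq_zero]
        intro b hb
        exact absurd ((Finset.mem_filter.mp hb).2) (hfin2 a c hac b)
      have hmw0 : ∀ a c : Fin 2, a ≠ c → maxWalkFn 2 p a c = 0 := by
        intro a c hac
        unfold maxWalkFn
        have he : {b : Fin 2 | b ≠ a ∧ b ≠ c} = ∅ := by
          ext b; simp only [Set.mem_setOf_eq, Set.mem_empty_iff_false, iff_false]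
          exact hfin2 a c hac b
        rw [he, Set.image_empty, Real.sSup_empty]
      have h3 : (∑ a : Fin 2, ∑ c ∈ Finset.univ.filter (· ≠ a), hopDFn 2 p a c) = 0 := by
        apply Finset.sum_eq_zero
        intro a _
        apply Finset.sum_eq_zero
        intro c hc
        have hca : c ≠ a := (Finset.mem_filter.mp hc).2
        unfold hopDFn
        rw [hop0 a c (Ne.symm hca), hmw0 a c (Ne.symm hca), sub_zero]
      have h4 : (∑ a : Fin 2, ∑ b : Fin 2, p a b) = 2 * p 0 1 := by
        rw [Fin.sum_univ_two, Fin.sum_univ_two, Fin.sum_univ_two, hdiag 0, hdiag 1, hsymm 1 0]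
        ring
      rw [h3, h4] at hcon
      norm_num at hcon
      -- hcon : ε ≤ p 0 1
      have h5 : (∑ a : Fin 2, ∑ b : Fin 2, (p a b) ^ 4) = 2 * (p 0 1) ^ 4 := by
        rw [Fin.sum_univ_two, Fin.sum_univ_two, Fin.sum_univ_two, hdiag 0, hdiag 1, hsymm 1 0]
        ring
      rw [h5]
      have hq : ε ^ 4 ≤ (p 0 1) ^ 4 := pow_le_pow_left₀ hε0.le hcon 4
      have hr1 : ((2:ℕ):ℝ) ^ ((4:ℕ):ℝ) ≤ ((2:ℕ):ℝ) ^ ((9 : ℝ) / 2) := by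
        apply Real.rpow_le_rpow_of_exponent_le (by norm_num)
        norm_num
      rw [Real.rpow_natCast] at hr1
      norm_num at hr1
      have hrpos : (0:ℝ) < ((2:ℕ):ℝ) ^ ((9 : ℝ) / 2) := Real.rpow_pos_of_pos (by norm_num) _
      have hchain : 2 * ε ^ 4 / ((2:ℕ):ℝ) ^ ((9 : ℝ) / 2) ≤ 2 * ε ^ 4 / 16 := by
        apply div_le_div_of_nonneg_left (by positivity) (by norm_num) hr1
      calc 2 * ε ^ 4 / ((2:ℕ):ℝ) ^ ((9 : ℝ) / 2) ≤ 2 * ε ^ 4 / 16 := hchain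
        _ ≤ (p 0 1) ^ 4 := by nlinarith [pow_nonneg hε0.le 4]
        _ ≤ 2 * (p 0 1) ^ 4 / 2 := by nlinarith [pow_nonneg (hnn 0 1) 4]
  · -- main case n ≥ 3
    have hn0 : (0:ℝ) < (n:ℝ) := by
      have : 0 < n := by omega
      exact_mod_cast this
    have hnR : (3:ℝ) ≤ (n:ℝ) := by exact_mod_cast hn3
    have hne : Nonempty (Fin n) := ⟨⟨0, by omega⟩⟩
    -- degree function (row sums)
    set D : Fin n → ℝ := fun b => ∑ c, p b c with hD
    have hDcol : ∀ b, (∑ a, p a b) = D b := by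
      intro b; rw [hD]; exact Finset.sum_congr rfl fun a _ => hsymm a b
    have hDnn : ∀ b, 0 ≤ D b := fun b => Finset.sum_nonneg fun c _ => hnn b c
    have hDzero : ∀ b, D b = 0 → ∀ c, p b c = 0 := by
      intro b hb c
      have h := (Finset.sum_eq_zero_iff_of_nonneg (fun c _ => hnn b c)).mp hb
      exact h c (Finset.mem_univ c)
    have hwalk : ∀ a c b, walkFn n p a c b = p a b * p b c / D b := by
      intro a c b; unfold walkFn degp; rw [hD]; congr 1; ring
    have hwalk_nn : ∀ a c b, 0 ≤ walkFn n p a c b := by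
      intro a c b; rw [hwalk]
      exact div_nonneg (mul_nonneg (hnn a b) (hnn b c)) (hDnn b)
    set Q : Fin n → ℝ := fun b => ∑ a, (p a b) ^ 2 with hQ
    set F : Fin n → ℝ := fun b => ∑ a, (p a b) ^ 4 with hF
    set R : Fin n → ℝ := fun b => Q b / D b with hR
    have hQnn : ∀ b, 0 ≤ Q b := fun b => Finset.sum_nonneg fun a _ => sq_nonneg _
    have hFnn : ∀ b, 0 ≤ F b := fun b => Finset.sum_nonneg fun a _ => by positivity
    have hRnn : ∀ b, 0 ≤ R b := fun b => div_nonneg (hQnn b) (hDnn b)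
    -- hop over full index set
    have hopFull : ∀ a c : Fin n, a ≠ c → hopFn n p a c = ∑ b, walkFn n p a c b := by
      intro a c _
      unfold hopFn
      apply Finset.sum_subset (Finset.filter_subset _ _)
      intro b _ hb
      simp only [Finset.mem_filter, Finset.mem_univ, true_and] at hb
      push_neg at hb
      by_cases hba : b = a
      · rw [hwalk, hba, hdiag, zero_mul, zero_div]
      · rw [hwalk, hb hba, hdiag, mul_zero, zero_div]
    -- per-b full double sum of walks
    have hfull : ∀ b, (∑ a, ∑ c, walkFn n p a c b) = D b := by
      intro b
      by_cases hb : D b = 0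
      · have h0 : ∀ a c : Fin n, walkFn n p a c b = 0 := fun a c => by
          rw [hwalk, hb, div_zero]
        calc (∑ a, ∑ c, walkFn n p a c b) = 0 := by
              apply Finset.sum_eq_zero; intro a _; exact Finset.sum_eq_zero fun c _ => h0 a c
          _ = D b := hb.symm
      · calc (∑ a, ∑ c, walkFn n p a c b) = ∑ a, p a b := by
              refine Finset.sum_congr rfl fun a _ => ?_
              have e1 : (∑ c, walkFn n p a c b) = p a b * (∑ c, p b c) / D b := by
                rw [Finset.mul_sum, Finset.sum_div]
                exact Finset.sum_congr rfl fun c _ => hwalk a c b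
              rw [e1, show (∑ c, p b c) = D b from rfl, mul_div_assoc, div_self hb, mul_one]
        _ = D b := hDcol b
    -- per-b diagonal sum of walks
    have hdiagw : ∀ b, (∑ a, walkFn n p a a b) = R b := by
      intro b
      have e0 : R b = (∑ a, (p a b) ^ 2) / D b := rfl
      rw [e0, Finset.sum_div]
      exact Finset.sum_congr rfl fun a _ => by rw [hwalk, hsymm b a, ← sq]
    -- total mass
    have hS : (∑ a, ∑ b, p a b) = ∑ b, D b := by
      rw [Finset.sum_comm]
    -- the hop identity
    have hHop : (∑ a, ∑ c ∈ Finset.univ.filter (· ≠ a), hopFn n p a c)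
        = (∑ b, D b) - (∑ b, R b) := by
      have step1 : ∀ a : Fin n, (∑ c ∈ Finset.univ.filter (· ≠ a), hopFn n p a c)
          = (∑ c, ∑ b, walkFn n p a c b) - (∑ b, walkFn n p a a b) := by
        intro a
        rw [Finset.filter_ne']
        have e1 : (∑ c ∈ Finset.univ.erase a, hopFn n p a c)
            = ∑ c ∈ Finset.univ.erase a, ∑ b, walkFn n p a c b := by
          apply Finset.sum_congr rfl
          intro c hc
          exact hopFull a c (Ne.symm (Finset.ne_of_mem_erase hc))
        rw [e1]
        exact Finset.sum_erase_eq_sub (Finset.mem_univ a)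
      calc (∑ a, ∑ c ∈ Finset.univ.filter (· ≠ a), hopFn n p a c)
          = ∑ a, ((∑ c, ∑ b, walkFn n p a c b) - (∑ b, walkFn n p a a b)) := by
            exact Finset.sum_congr rfl fun a _ => step1 a
        _ = (∑ a, ∑ c, ∑ b, walkFn n p a c b) - (∑ a, ∑ b, walkFn n p a a b) := by
            rw [Finset.sum_sub_distrib]
        _ = (∑ b, ∑ a, ∑ c, walkFn n p a c b) - (∑ b, ∑ a, walkFn n p a a b) := by
            congr 1
            · rw [show (∑ a, ∑ c, ∑ b, walkFn n p a c b)
                  = ∑ a, ∑ b, ∑ c, walkFn n p a c b from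
                Finset.sum_congr rfl fun a _ => Finset.sum_comm]
              exact Finset.sum_comm
            · exact Finset.sum_comm
        _ = (∑ b, D b) - (∑ b, R b) := by
            congr 1
            · exact Finset.sum_congr rfl fun b _ => hfull b
            · exact Finset.sum_congr rfl fun b _ => hdiagw b
    -- attainment of the max walk
    have hSfin : ∀ a c : Fin n, a ≠ c → ∃ b : Fin n,
        maxWalkFn n p a c = walkFn n p a c b := by
      intro a c _
      classical
      set sf : Finset (Fin n) := Finset.univ.filter (fun b => b ≠ a ∧ b ≠ c) with hsf
      have hne' : sf.Nonempty := by
        by_contra h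
        rw [Finset.not_nonempty_iff_eq_empty] at h
        have hsub2 : (Finset.univ : Finset (Fin n)) ⊆ {a, c} := by
          intro b _
          by_contra hb
          simp only [Finset.mem_insert, Finset.mem_singleton] at hb
          push_neg at hb
          have hbm : b ∈ sf := by
            rw [hsf]; simp only [Finset.mem_filter, Finset.mem_univ, true_and]
            exact hb
          rw [h] at hbm
          exact absurd hbm (Finset.notMem_empty b)
        have h1 : (Finset.univ : Finset (Fin n)).card ≤ ({a, c} : Finset (Fin n)).card :=
          Finset.card_le_card hsub2
        have h2 : ({a, c} : Finset (Fin n)).card ≤ 2 := by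
          apply le_trans (Finset.card_insert_le a {c})
          simp
        rw [Finset.card_univ, Fintype.card_fin] at h1
        omega
      have himg : ((fun b => walkFn n p a c b) '' {b : Fin n | b ≠ a ∧ b ≠ c})
          = ↑(sf.image (fun b => walkFn n p a c b)) := by
        rw [Finset.coe_image]
        congr 1
        ext b
        simp [hsf]
      have hne2 : (sf.image (fun b => walkFn n p a c b)).Nonempty := hne'.image _
      have hmx : maxWalkFn n p a c = (sf.image (fun b => walkFn n p a c b)).max' hne2 := by
        unfold maxWalkFn
        rw [himg]
        exact hne2.csSup_eq_max'
      obtain ⟨b, hbmem, hbeq⟩ := Finset.mem_image.mp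
        ((sf.image (fun b => walkFn n p a c b)).max'_mem hne2)
      exact ⟨b, by rw [hmx, ← hbeq]⟩
    -- choice of the maximizing middle vertex
    have hβex : ∀ z : Fin n × Fin n, ∃ b : Fin n,
        z.1 ≠ z.2 → maxWalkFn n p z.1 z.2 = walkFn n p z.1 z.2 b := by
      intro z
      by_cases hz : z.1 = z.2
      · exact ⟨z.1, fun h => absurd hz h⟩
      · obtain ⟨b, hb⟩ := hSfin z.1 z.2 hz
        exact ⟨b, fun _ => hb⟩
    choose β hβ using hβex
    classical
    -- the off-diagonal index set and the fibers of the charging map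
    set A : Finset (Fin n × Fin n) := (Finset.univ : Finset (Fin n)).offDiag with hA
    have hAmem : ∀ z : Fin n × Fin n, z ∈ A ↔ z.1 ≠ z.2 := by
      intro z; rw [hA]; simp [Finset.mem_offDiag]
    set P : Fin n → Finset (Fin n × Fin n) := fun b => A.filter (fun z => β z = b) with hP
    set σfn : Fin n → ℝ := fun b => ∑ z ∈ P b, walkFn n p z.1 z.2 b with hσ
    have hσnn : ∀ b, 0 ≤ σfn b := fun b => Finset.sum_nonneg fun z _ => hwalk_nn _ _ _
    -- converting offDiag sums to the double-sum form
    have hfilterA : A = (Finset.univ : Finset (Fin n × Fin n)).filter (fun z => z.1 ≠ z.2) := by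
      ext z
      simp [hA, Finset.mem_offDiag]
    have hoffd : ∀ f : Fin n → Fin n → ℝ,
        (∑ z ∈ A, f z.1 z.2) = ∑ a, ∑ c ∈ Finset.univ.filter (· ≠ a), f a c := by
      intro f
      rw [hfilterA, Finset.sum_filter]
      rw [show (∑ z : Fin n × Fin n, if z.1 ≠ z.2 then f z.1 z.2 else 0)
          = ∑ a, ∑ c, if a ≠ c then f a c else 0 from Fintype.sum_prod_type _]
      refine Finset.sum_congr rfl fun a _ => ?_
      rw [Finset.sum_filter]
      refine Finset.sum_congr rfl fun c _ => ?_
      exact if_congr ne_comm rfl rfl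
    -- the ordered max-walk sum equals the sum of the fiber sums
    have hW : (∑ a, ∑ c ∈ Finset.univ.filter (· ≠ a), maxWalkFn n p a c) = ∑ b, σfn b := by
      rw [← hoffd (fun a c => maxWalkFn n p a c)]
      calc (∑ z ∈ A, maxWalkFn n p z.1 z.2)
          = ∑ z ∈ A, walkFn n p z.1 z.2 (β z) :=
            Finset.sum_congr rfl fun z hz => hβ z ((hAmem z).mp hz)
        _ = ∑ b, ∑ z ∈ A.filter (fun z => β z = b), walkFn n p z.1 z.2 (β z) :=
            (Finset.sum_fiberwise_of_maps_to (fun z _ => Finset.mem_univ (β z)) _).symm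
        _ = ∑ b, σfn b := by
            refine Finset.sum_congr rfl fun b _ => ?_
            rw [hσ]
            refine Finset.sum_congr (by rw [hP]) fun z hz => ?_
            rw [(Finset.mem_filter.mp hz).2]
    -- the master inequality: ε ≤ (∑ (R + σ))/2
    have hmaster : ε ≤ (∑ b, (R b + σfn b)) / 2 := by
      have hHD : (∑ a, ∑ c ∈ Finset.univ.filter (· ≠ a), hopDFn n p a c)
          = (∑ a, ∑ c ∈ Finset.univ.filter (· ≠ a), hopFn n p a c)
            - (∑ a, ∑ c ∈ Finset.univ.filter (· ≠ a), maxWalkFn n p a c) := by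
        rw [← Finset.sum_sub_distrib]
        refine Finset.sum_congr rfl fun a _ => ?_
        rw [← Finset.sum_sub_distrib]
        exact Finset.sum_congr rfl fun c _ => rfl
      have hsplit : (∑ b, (R b + σfn b)) = (∑ b, R b) + (∑ b, σfn b) :=
        Finset.sum_add_distrib
      rw [hHD, hHop, hW, hS] at hcon
      linarith [hcon, hsplit]
    -- per-b key estimate
    have key : ∀ b : Fin n, (R b + σfn b) ^ 4
        ≤ (1 + Real.sqrt ((P b).card : ℝ)) ^ 3 * (Real.sqrt 2 * F b) := by
      intro b
      obtain ⟨a₀, _, hmax⟩ := Finset.exists_max_image Finset.univ (fun a => p a b)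
        Finset.univ_nonempty
      have hm0 : 0 ≤ p a₀ b := hnn a₀ b
      have hmF : (p a₀ b) ^ 4 ≤ F b := by
        rw [hF]
        exact Finset.single_le_sum (f := fun a => (p a b) ^ 4)
          (fun a _ => by positivity) (Finset.mem_univ a₀)
      have hRm : R b ≤ p a₀ b := by
        by_cases hb : D b = 0
        · have : R b = 0 := by rw [hR]; simp [hb]
          rw [this]; exact hm0
        · have hbpos : 0 < D b := lt_of_le_of_ne (hDnn b) (Ne.symm hb)
          rw [hR, div_le_iff₀ hbpos]
          calc Q b = ∑ a, (p a b) ^ 2 := rfl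
            _ ≤ ∑ a, p a₀ b * p a b := by
                refine Finset.sum_le_sum fun a _ => ?_
                have h1 := hmax a (Finset.mem_univ a)
                nlinarith [hnn a b]
            _ = p a₀ b * ∑ a, p a b := by rw [Finset.mul_sum]
            _ = p a₀ b * D b := by rw [hDcol]
      have hRb0 : 0 ≤ R b := hRnn b
      have hσb0 : 0 ≤ σfn b := hσnn b
      have hFb0 : 0 ≤ F b := hFnn b
      have h2sqrt : (1:ℝ) ≤ Real.sqrt 2 := by
        rw [show (1:ℝ) = Real.sqrt 1 from (Real.sqrt_one).symm]
        exact Real.sqrt_le_sqrt one_le_two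
      by_cases hx : (P b).card = 0
      · have hPe : P b = ∅ := Finset.card_eq_zero.mp hx
        have hσ0 : σfn b = 0 := by rw [hσ]; simp [hPe]
        rw [hσ0, hx, add_zero]
        simp only [Nat.cast_zero, Real.sqrt_zero, add_zero, one_pow, one_mul]
        calc (R b) ^ 4 ≤ (p a₀ b) ^ 4 := pow_le_pow_left₀ hRb0 hRm 4
          _ ≤ F b := hmF
          _ ≤ Real.sqrt 2 * F b := le_mul_of_one_le_left hFb0 h2sqrt
      · have hxpos : 0 < ((P b).card : ℝ) := by
          have : 0 < (P b).card := Nat.pos_of_ne_zero hx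
          exact_mod_cast this
        set s := Real.sqrt ((P b).card : ℝ) with hs_def
        have hs : 0 < s := Real.sqrt_pos.mpr hxpos
        have hs2 : s ^ 2 = ((P b).card : ℝ) := Real.sq_sqrt hxpos.le
        -- σ ≤ D b
        have hσD : σfn b ≤ D b := by
          by_cases hb : D b = 0
          · have hσ0 : σfn b = 0 := Finset.sum_eq_zero fun z _ => by
              rw [hwalk, hb, div_zero]
            rw [hσ0, hb]
          · have hbpos : 0 < D b := lt_of_le_of_ne (hDnn b) (Ne.symm hb)
            have h1 : σfn b = (∑ z ∈ P b, p z.1 b * p b z.2) / D b := by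
              rw [hσ, Finset.sum_div]
              exact Finset.sum_congr rfl fun z _ => hwalk z.1 z.2 b
            rw [h1, div_le_iff₀ hbpos]
            calc (∑ z ∈ P b, p z.1 b * p b z.2)
                ≤ ∑ z : Fin n × Fin n, p z.1 b * p b z.2 :=
                  Finset.sum_le_sum_of_subset_of_nonneg (Finset.subset_univ _)
                    (fun z _ _ => mul_nonneg (hnn _ _) (hnn _ _))
              _ = ∑ a, ∑ c, p a b * p b c := Fintype.sum_prod_type _
              _ = (∑ a, p a b) * (∑ c, p b c) := (Finset.sum_mul_sum _ _ _ _).symm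
              _ = D b * D b := by rw [hDcol]
        -- σ⁴ ≤ x³ · ∑_{P b} walk⁴
        have hσ4 : (σfn b) ^ 4
            ≤ ((P b).card : ℝ) ^ 3 * ∑ z ∈ P b, (walkFn n p z.1 z.2 b) ^ 4 := by
          have h := pow_sum_le_card_mul_sum_pow (s := P b)
            (f := fun z => walkFn n p z.1 z.2 b) (fun z _ => hwalk_nn _ _ _) 3
          calc (σfn b) ^ 4 = (∑ z ∈ P b, walkFn n p z.1 z.2 b) ^ (3+1) := by rw [hσ]
            _ ≤ ((P b).card : ℝ) ^ 3 * ∑ z ∈ P b, (walkFn n p z.1 z.2 b) ^ (3+1) := h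
            _ = ((P b).card : ℝ) ^ 3 * ∑ z ∈ P b, (walkFn n p z.1 z.2 b) ^ 4 := by norm_num
        -- σ⁸ ≤ x³ (F² − m⁸)
        have hFm2 : (p a₀ b) ^ 4 * (p a₀ b) ^ 4 ≤ F b * F b :=
          mul_le_mul hmF hmF (by positivity) hFb0
        have hσ8 : (σfn b) ^ 4 * (σfn b) ^ 4
            ≤ ((P b).card : ℝ) ^ 3 * (F b * F b - (p a₀ b) ^ 4 * (p a₀ b) ^ 4) := by
          by_cases hb : D b = 0
          · have hσ0 : σfn b = 0 := Finset.sum_eq_zero fun z _ => by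
              rw [hwalk, hb, div_zero]
            have h9 : (0:ℝ) ≤ ((P b).card : ℝ) ^ 3
                * (F b * F b - (p a₀ b) ^ 4 * (p a₀ b) ^ 4) :=
              mul_nonneg (pow_nonneg (Nat.cast_nonneg _) 3) (by linarith)
            rw [hσ0]
            calc (0:ℝ) ^ 4 * (0:ℝ) ^ 4 = 0 := by norm_num
              _ ≤ _ := h9
          · have hbpos : 0 < D b := lt_of_le_of_ne (hDnn b) (Ne.symm hb)
            have hAsum : (∑ z ∈ A, (p z.1 b) ^ 4 * (p b z.2) ^ 4)
                ≤ F b * F b - (p a₀ b) ^ 4 * (p a₀ b) ^ 4 := by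
              have hfullsum : (∑ z : Fin n × Fin n, (p z.1 b) ^ 4 * (p b z.2) ^ 4)
                  = F b * F b := by
                rw [Fintype.sum_prod_type _]
                rw [show (∑ a, ∑ c, (p a b) ^ 4 * (p b c) ^ 4)
                    = (∑ a, (p a b) ^ 4) * (∑ c, (p b c) ^ 4) from
                  (Finset.sum_mul_sum _ _ _ _).symm]
                congr 1
                rw [hF]
                exact Finset.sum_congr rfl fun c _ => by rw [hsymm b c]
              have hdiagsum : (p a₀ b) ^ 4 * (p a₀ b) ^ 4
                  ≤ ∑ a, (p a b) ^ 4 * (p b a) ^ 4 := by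
                have h := Finset.single_le_sum
                  (f := fun a => (p a b) ^ 4 * (p b a) ^ 4)
                  (fun a _ => by positivity) (Finset.mem_univ a₀)
                calc (p a₀ b) ^ 4 * (p a₀ b) ^ 4
                    = (p a₀ b) ^ 4 * (p b a₀) ^ 4 := by rw [hsymm b a₀]
                  _ ≤ _ := h
              have hsplitA : (∑ z : Fin n × Fin n, (p z.1 b) ^ 4 * (p b z.2) ^ 4)
                  = (∑ z ∈ A, (p z.1 b) ^ 4 * (p b z.2) ^ 4)
                    + ∑ a, (p a b) ^ 4 * (p b a) ^ 4 := by
                rw [hfilterA]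
                rw [← Finset.sum_filter_add_sum_filter_not
                  (Finset.univ : Finset (Fin n × Fin n)) (fun z => z.1 ≠ z.2)
                  (fun z => (p z.1 b) ^ 4 * (p b z.2) ^ 4)]
                congr 1
                have e1 : Finset.filter (fun z : Fin n × Fin n => ¬z.1 ≠ z.2) Finset.univ
                    = Finset.filter (fun z : Fin n × Fin n => z.1 = z.2) Finset.univ := by
                  apply Finset.filter_congr
                  intro z _
                  simp
                rw [e1, Finset.sum_filter]
                rw [Fintype.sum_prod_type _]
                refine Finset.sum_congr rfl fun a _ => ?_
                rw [Finset.sum_ite_eq (Finset.univ) a (fun c => (p a b) ^ 4 * (p b c) ^ 4)]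
                simp
              linarith [hfullsum, hsplitA, hdiagsum]
            have hsum4 : (∑ z ∈ P b, (walkFn n p z.1 z.2 b) ^ 4)
                ≤ (F b * F b - (p a₀ b) ^ 4 * (p a₀ b) ^ 4) / (D b) ^ 4 := by
              calc (∑ z ∈ P b, (walkFn n p z.1 z.2 b) ^ 4)
                  ≤ ∑ z ∈ A, (walkFn n p z.1 z.2 b) ^ 4 := by
                    apply Finset.sum_le_sum_of_subset_of_nonneg
                    · rw [hP]; exact Finset.filter_subset _ _
                    · intro z _ _; exact pow_nonneg (hwalk_nn _ _ _) 4
                _ = (∑ z ∈ A, (p z.1 b) ^ 4 * (p b z.2) ^ 4) / (D b) ^ 4 := by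
                    rw [Finset.sum_div]
                    refine Finset.sum_congr rfl fun z _ => ?_
                    rw [hwalk, div_pow, mul_pow]
                _ ≤ (F b * F b - (p a₀ b) ^ 4 * (p a₀ b) ^ 4) / (D b) ^ 4 := by
                    exact div_le_div_of_nonneg_right hAsum (by positivity)
            have hσD4 : (σfn b) ^ 4 ≤ (D b) ^ 4 := pow_le_pow_left₀ hσb0 hσD 4
            have hD4 : (0:ℝ) < (D b) ^ 4 := by positivity
            calc (σfn b) ^ 4 * (σfn b) ^ 4
                ≤ (((P b).card : ℝ) ^ 3 * ∑ z ∈ P b, (walkFn n p z.1 z.2 b) ^ 4)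
                    * (D b) ^ 4 := by
                  have h0 : (0:ℝ) ≤ ∑ z ∈ P b, (walkFn n p z.1 z.2 b) ^ 4 :=
                    Finset.sum_nonneg fun z _ => pow_nonneg (hwalk_nn _ _ _) 4
                  exact mul_le_mul hσ4 hσD4 (pow_nonneg hσb0 4)
                    (mul_nonneg (pow_nonneg (Nat.cast_nonneg _) 3) h0)
              _ ≤ (((P b).card : ℝ) ^ 3
                    * ((F b * F b - (p a₀ b) ^ 4 * (p a₀ b) ^ 4) / (D b) ^ 4))
                    * (D b) ^ 4 := by
                  apply mul_le_mul_of_nonneg_right _ hD4.le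
                  exact mul_le_mul_of_nonneg_left hsum4 (pow_nonneg (Nat.cast_nonneg _) 3)
              _ = ((P b).card : ℝ) ^ 3 * (F b * F b - (p a₀ b) ^ 4 * (p a₀ b) ^ 4) := by
                  field_simp
        -- the balancing step
        set v := (σfn b) ^ 4 / s ^ 3 with hv_def
        clear_value v
        have hv0 : 0 ≤ v := by
          rw [hv_def]
          exact div_nonneg (pow_nonneg hσb0 4) (pow_nonneg hs.le 3)
        have hv2 : v ^ 2 ≤ F b * F b - (p a₀ b) ^ 4 * (p a₀ b) ^ 4 := by
          rw [hv_def, div_pow, div_le_iff₀ (pow_pos (pow_pos hs 3) 2)]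
          have hs6 : (s ^ 3) ^ 2 = ((P b).card : ℝ) ^ 3 := by
            calc (s ^ 3) ^ 2 = (s ^ 2) ^ 3 := by ring
              _ = ((P b).card : ℝ) ^ 3 := by rw [hs2]
          rw [hs6]
          calc ((σfn b) ^ 4) ^ 2 = (σfn b) ^ 4 * (σfn b) ^ 4 := by ring
            _ ≤ ((P b).card : ℝ) ^ 3 * (F b * F b - (p a₀ b) ^ 4 * (p a₀ b) ^ 4) := hσ8
            _ = (F b * F b - (p a₀ b) ^ 4 * (p a₀ b) ^ 4) * ((P b).card : ℝ) ^ 3 := by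
                ring
        have huv : (p a₀ b) ^ 4 + v ≤ Real.sqrt 2 * F b := by
          have h1 : ((p a₀ b) ^ 4 + v) ^ 2 ≤ 2 * (F b) ^ 2 := by
            nlinarith [sq_nonneg ((p a₀ b) ^ 4 - v), hv2]
          have h2 : (p a₀ b) ^ 4 + v ≤ Real.sqrt (2 * (F b) ^ 2) := by
            rw [← Real.sqrt_sq (add_nonneg (pow_nonneg hm0 4) hv0)]
            exact Real.sqrt_le_sqrt h1
          rwa [Real.sqrt_mul (by norm_num : (0:ℝ) ≤ 2) ((F b) ^ 2),
            Real.sqrt_sq hFb0] at h2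
        have hc4 := aux_cauchy4 (R b) (σfn b) s hs
        calc (R b + σfn b) ^ 4
            ≤ (1 + s) ^ 3 * ((R b) ^ 4 + (σfn b) ^ 4 / s ^ 3) := hc4
          _ ≤ (1 + s) ^ 3 * (Real.sqrt 2 * F b) := by
              apply mul_le_mul_of_nonneg_left _ (pow_nonneg (by linarith [hs.le]) 3)
              have hR4 : (R b) ^ 4 ≤ (p a₀ b) ^ 4 := pow_le_pow_left₀ hRb0 hRm 4
              have hvv : (σfn b) ^ 4 / s ^ 3 = v := hv_def.symm
              rw [hvv]
              linarith [huv, hR4]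
    -- fiber counting
    have hcards : (∑ b, (((P b).card : ℕ) : ℝ)) = (n : ℝ) * n - n := by
      have h1 : A.card = ∑ b, (P b).card := by
        rw [hP]
        exact Finset.card_eq_sum_card_fiberwise (fun z _ => Finset.mem_univ (β z))
      have h2 : A.card = n * n - n := by
        rw [hA, Finset.offDiag_card, Finset.card_univ, Fintype.card_fin]
      have h3 : (∑ b, (P b).card) = n * n - n := by rw [← h1, h2]
      have h4 : n ≤ n * n := Nat.le_mul_of_pos_left n (by omega)
      calc (∑ b, (((P b).card : ℕ) : ℝ)) = ((∑ b, (P b).card : ℕ) : ℝ) := by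
            rw [Nat.cast_sum]
        _ = ((n * n - n : ℕ) : ℝ) := by rw [h3]
        _ = (n : ℝ) * n - n := by
            rw [Nat.cast_sub h4]; push_cast; ring
    -- the global estimate
    have h16 := aux_global n hn3 R σfn F (fun b => (P b).card) ε hε0.le
      hRnn hσnn hFnn (fun b => key b) hcards hmaster
    -- final numerics
    have hGG : (∑ b, F b) = ∑ a, ∑ b, (p a b) ^ 4 := by
      rw [hF, Finset.sum_comm]
    have hG0 : 0 ≤ ∑ b, F b := Finset.sum_nonneg fun b _ => hFnn b
    have hsqrtn0 : 0 ≤ Real.sqrt (n : ℝ) := Real.sqrt_nonneg _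
    have hrp : (n : ℝ) ^ ((9 : ℝ) / 2) = (n : ℝ) ^ 4 * Real.sqrt (n : ℝ) := by
      rw [show (9 : ℝ) / 2 = ((4 : ℕ) : ℝ) + 1 / 2 by norm_num]
      rw [Real.rpow_add hn0, Real.rpow_natCast]
      congr 1
      rw [Real.sqrt_eq_rpow]
    rw [hrp, div_le_div_iff₀ (by positivity) (by norm_num : (0:ℝ) < 2)]
    rw [← hGG]
    nlinarith [h16, hG0, hsqrtn0]
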